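/- Let p ≥ 2 be an integer, let F : ℂ² → ℂ² be a holomorphic map, and let (z₀, w₀) ∈ ℂ² with z₀ ≠ 0 be such that F(e^{2πiℓ/p}·z₀, w₀) = 0 for every ℓ = 0, 1, …, p−1. Define F_p(z,w) := F(z,w) + (e^{2πi/p}·z, w). Then (z₀, w₀) is a p-primitive periodic point of F_p, i.e., F_p^{∘p}(z₀,w₀) = (z₀,w₀) while F_p^{∘j}(z₀,w₀) ≠ (z₀,w₀) for all 1 ≤ j ≤ p−1. -/
import Mathlib


open Function

/-- If `F : ℂ² → ℂ²` is holomorphic and vanishes at all the rotated points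
`(e^{2πiℓ/p}·z₀, w₀)`, `0 ≤ ℓ ≤ p-1`, with `z₀ ≠ 0`, then `(z₀, w₀)` is a `p`-primitive
periodic point of `F_p(z,w) := F(z,w) + (e^{2πi/p}·z, w)`. -/
theorem ppp_of_rotated_zeros (p : ℕ) (hp : 2 ≤ p)
    (F : ℂ × ℂ → ℂ × ℂ) (hF : Differentiable ℂ F)
    (z₀ w₀ : ℂ) (hz₀ : z₀ ≠ 0)
    (hzeros : ∀ ℓ : ℕ, ℓ < p →
      F (Complex.exp (2 * Real.pi * Complex.I * ℓ / p) * z₀, w₀) = 0) :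
    (fun ζ : ℂ × ℂ =>
        F ζ + (Complex.exp (2 * Real.pi * Complex.I / p) * ζ.1, ζ.2))^[p] (z₀, w₀)
      = (z₀, w₀) ∧
    ∀ j : ℕ, 1 ≤ j → j < p →
      (fun ζ : ℂ × ℂ =>
          F ζ + (Complex.exp (2 * Real.pi * Complex.I / p) * ζ.1, ζ.2))^[j] (z₀, w₀)
        ≠ (z₀, w₀) := by
  have hp0 : (p : ℂ) ≠ 0 := Nat.cast_ne_zero.mpr (by omega)
  set ω : ℂ := Complex.exp (2 * Real.pi * Complex.I / p) with hω
  have hpow : ∀ ℓ : ℕ, ω ^ ℓ = Complex.exp (2 * Real.pi * Complex.I * ℓ / p) := by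
    intro ℓ
    rw [hω, ← Complex.exp_nat_mul]
    ring_nf
  have key : ∀ j : ℕ, j ≤ p →
      (fun ζ : ℂ × ℂ => F ζ + (ω * ζ.1, ζ.2))^[j] (z₀, w₀) = (ω ^ j * z₀, w₀) := by
    intro j hj
    induction j with
    | zero => simp
    | succ n ih =>
      rw [Function.iterate_succ_apply', ih (by omega)]
      simp only
      rw [hpow n, hzeros n (by omega), ← hpow n]
      simp [pow_succ, mul_assoc, mul_comm]
      ring
  have hprim : IsPrimitiveRoot ω p := Complex.isPrimitiveRoot_exp p (by omega)
  constructor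
  · rw [key p le_rfl, hprim.pow_eq_one, one_mul]
  · intro j hj1 hjp h
    rw [key j (le_of_lt hjp)] at h
    have h1 : ω ^ j * z₀ = z₀ := congrArg Prod.fst h
    have : ω ^ j = 1 := by
      have := mul_right_cancel₀ hz₀ (h1.trans (one_mul z₀).symm)
      exact this
    exact hprim.pow_ne_one_of_pos_of_lt (by omega) hjp this
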